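/- For every positive even integer n and all real numbers a, b with 0 < a < 1, 0 < b < 1, and a ≠ b, there exists a Bayesian opinion framework and a fixed state ω* whose Bayesian dialogue has opinion sequence (a, a, …, a, b, b, b, …): both agents announce the same opinion a for the first n periods (apparent agreement), and then the opinions suddenly jump to consensus at b for all subsequent times. -/

import Mathlib

/- Formalization of "Rational Dialogues" (Geanakoplos–Polemarchakis).

A Bayesian opinion framework on a finite type `Ω` consists of a strictly
positive probability `π` on `Ω`, an event `A : Finset Ω`, and two partitions
given by their cell maps `P Q : Ω → Finset Ω`.  The agents speak alternately;
the listener refines her partition by the speaker's announced opinion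
function.  `dialogue π A P Q pFirst ω₀ t` is the opinion announced at
(0-indexed) time `t` at the fixed state `ω₀`, where `pFirst = true` means
agent `p` (whose partition is `P`) speaks first. -/

namespace RationalDialogues

variable {Ω : Type}

/-- The measure of a finite set of states. -/
noncomputable def mass [Fintype Ω] (π : Ω → ℝ) (s : Finset Ω) : ℝ :=
  ∑ ω ∈ s, π ω

/-- `C` is the cell map of a partition of `Ω`: every point lies in its own
cell, and any point of a cell has that same cell. -/
def IsPartition [Fintype Ω] (C : Ω → Finset Ω) : Prop :=
  (∀ ω, ω ∈ C ω) ∧ ∀ ω ω', ω' ∈ C ω → C ω' = C ω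

/-- The Bayesian opinion of the agent with cell map `C` at state `ω`:
the conditional probability of `A` given the cell `C ω`. -/
noncomputable def opin [Fintype Ω] [DecidableEq Ω] (π : Ω → ℝ) (A : Finset Ω)
    (C : Ω → Finset Ω) (ω : Ω) : ℝ :=
  mass π (C ω ∩ A) / mass π (C ω)

open Classical in
/-- The refinement `D ∨ c_A` of the listener's partition `D` by the speaker's
announced opinion function (the speaker's cell map being `C`):
`[D ∨ c_A](ω) = D(ω) ∩ {ω' : opinion_C(ω') = opinion_C(ω)}`. -/
noncomputable def refineBy [Fintype Ω] [DecidableEq Ω] (π : Ω → ℝ) (A : Finset Ω)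
    (C D : Ω → Finset Ω) : Ω → Finset Ω :=
  fun ω => (D ω).filter (fun ω' => opin π A C ω' = opin π A C ω)

/-- Agent `p` is the speaker at (0-indexed) time `n`. -/
def pSpeaksAt (pFirst : Bool) (n : ℕ) : Prop := (pFirst = true ↔ Even n)

open Classical in
/-- The pair of partitions (cell maps of `p` and `q`) at (0-indexed) time `n`,
starting from `(P, Q)` at time `0`, where at each time the current speaker's
opinion function refines the listener's partition for the next period. -/
noncomputable def partsAt [Fintype Ω] [DecidableEq Ω] (π : Ω → ℝ) (A : Finset Ω)
    (P Q : Ω → Finset Ω) (pFirst : Bool) : ℕ → (Ω → Finset Ω) × (Ω → Finset Ω)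
  | 0 => (P, Q)
  | n + 1 =>
      let C := partsAt π A P Q pFirst n
      if pSpeaksAt pFirst n then (C.1, refineBy π A C.1 C.2)
      else (refineBy π A C.2 C.1, C.2)

open Classical in
/-- The Bayesian dialogue at the fixed state `ω₀`: the opinion announced at
(0-indexed) time `n` by the time-`n` speaker, given his/her current cell. -/
noncomputable def dialogue [Fintype Ω] [DecidableEq Ω] (π : Ω → ℝ) (A : Finset Ω)
    (P Q : Ω → Finset Ω) (pFirst : Bool) (ω₀ : Ω) (n : ℕ) : ℝ :=
  if pSpeaksAt pFirst n then opin π A (partsAt π A P Q pFirst n).1 ω₀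
  else opin π A (partsAt π A P Q pFirst n).2 ω₀

/-- `(π, P, Q)` is a Bayesian opinion framework: `π` is a strictly positive
probability on the finite type `Ω` and `P`, `Q` are partitions. -/
def IsBOF [Fintype Ω] (π : Ω → ℝ) (P Q : Ω → Finset Ω) : Prop :=
  (∀ ω, 0 < π ω) ∧ (∑ ω, π ω = 1) ∧ IsPartition P ∧ IsPartition Q

end RationalDialogues

open RationalDialogues
open RationalDialogues

namespace Jump

open Finset

variable (n : ℕ) (a b : ℝ)

noncomputable def mu : ℝ := min a (1 - a) / (2 * |b - a|)

noncomputable def eps (k : ℕ) : ℝ :=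
  if k = n - 1 then b - a else (b - a) * mu a b * (-1) ^ (k + 1)

noncomputable def pp (k : ℕ) : ℝ := a + eps n a b k

noncomputable def mm (k : ℕ) : ℝ := if k = n - 1 then mu a b else 1

noncomputable def TT : ℝ := ∑ i ∈ Finset.range (2 * n + 2), mm n a b i

abbrev St := Fin (2 * n + 2) × Bool

noncomputable def wt (ω : St n) : ℝ :=
  if ω.2 then pp n a b ω.1.val * mm n a b ω.1.val
  else (1 - pp n a b ω.1.val) * mm n a b ω.1.val

noncomputable def pi' (ω : St n) : ℝ := wt n a b ω / TT n a b

def AA : Finset (St n) := Finset.univ.filter fun ω => ω.2 = true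

def thP (x : ℕ) : ℕ := min (2 * (x / 2) + 2) (2 * n + 2 - 2 * (x / 2))

def thQ (x : ℕ) : ℕ := min (2 * ((x + 1) / 2) + 1) (2 * n + 3 - 2 * ((x + 1) / 2))

def Pc (s : ℕ) (ω : St n) : Finset (St n) :=
  Finset.univ.filter fun ω' => ω'.1.val / 2 = ω.1.val / 2 ∧ (thP n ω.1.val ≤ s → ω'.1 = ω.1)

def Qc (s : ℕ) (ω : St n) : Finset (St n) :=
  Finset.univ.filter fun ω' =>
    (ω'.1.val + 1) / 2 = (ω.1.val + 1) / 2 ∧ (thQ n ω.1.val ≤ s → ω'.1 = ω.1)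

structure Hyp (n : ℕ) (a b : ℝ) : Prop where
  ha0 : 0 < a
  ha1 : a < 1
  hb0 : 0 < b
  hb1 : b < 1
  hab : a ≠ b
  hn : 2 ≤ n
  hpar : n % 2 = 0

variable {n a b}

lemma Hyp.hba (H : Hyp n a b) : b - a ≠ 0 := sub_ne_zero.mpr (Ne.symm H.hab)

lemma Hyp.hmin (H : Hyp n a b) : 0 < min a (1 - a) := lt_min H.ha0 (by linarith [H.ha1])

lemma Hyp.mu_pos (H : Hyp n a b) : 0 < mu a b :=
  div_pos H.hmin (mul_pos two_pos (abs_pos.mpr H.hba))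

lemma pp_val_mid : pp n a b (n - 1) = b := by
  unfold pp eps; rw [if_pos rfl]; ring

lemma abs_eps_off (H : Hyp n a b) (k : ℕ) (hk : k ≠ n - 1) :
    |eps n a b k| = min a (1 - a) / 2 := by
  have h2 : |b - a| ≠ 0 := abs_ne_zero.mpr H.hba
  unfold eps
  rw [if_neg hk, abs_mul, abs_mul, abs_pow, abs_neg, abs_one, one_pow, mul_one,
    abs_of_pos H.mu_pos]
  unfold mu
  field_simp

lemma pp_bounds (H : Hyp n a b) (k : ℕ) : 0 < pp n a b k ∧ pp n a b k < 1 := by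
  by_cases hk : k = n - 1
  · subst hk; rw [pp_val_mid]; exact ⟨H.hb0, H.hb1⟩
  · have h1 := abs_eps_off H k hk
    have h2 := abs_le.mp (le_of_eq h1)
    have hm1 : min a (1 - a) ≤ a := min_le_left _ _
    have hm2 : min a (1 - a) ≤ 1 - a := min_le_right _ _
    have hm0 := H.hmin
    unfold pp
    constructor <;> [nlinarith [h2.1, h2.2, H.ha0]; nlinarith [h2.1, h2.2, H.ha1]]

lemma pp_pos (H : Hyp n a b) (k : ℕ) : 0 < pp n a b k := (pp_bounds H k).1

lemma pp_lt_one (H : Hyp n a b) (k : ℕ) : pp n a b k < 1 := (pp_bounds H k).2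

lemma eps_ne_zero (H : Hyp n a b) (k : ℕ) : eps n a b k ≠ 0 := by
  unfold eps
  by_cases hk : k = n - 1
  · rw [if_pos hk]; exact H.hba
  · rw [if_neg hk]
    exact mul_ne_zero (mul_ne_zero H.hba H.mu_pos.ne') (pow_ne_zero _ (by norm_num))

lemma pp_ne_a (H : Hyp n a b) (k : ℕ) : pp n a b k ≠ a := by
  unfold pp
  intro h
  exact eps_ne_zero H k (by linarith)

lemma pp_mid_ne (H : Hyp n a b) : pp n a b n ≠ pp n a b (n + 1) := by
  have hn := H.hn
  unfold pp eps
  rw [if_neg (by omega : ¬ n = n - 1), if_neg (by omega : ¬ n + 1 = n - 1)]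
  intro h
  have h2 : (b - a) * mu a b ≠ 0 := mul_ne_zero H.hba H.mu_pos.ne'
  have h3 : ((-1 : ℝ)) ^ (n + 1 + 1) = -((-1 : ℝ)) ^ (n + 1) := by rw [pow_succ]; ring
  rw [h3] at h
  have h5 : (b - a) * mu a b * ((-1 : ℝ)) ^ (n + 1) = (b - a) * mu a b * (-((-1 : ℝ)) ^ (n + 1)) := by
    linarith
  have h6 : ((-1 : ℝ)) ^ (n + 1) = -((-1 : ℝ)) ^ (n + 1) := mul_left_cancel₀ h2 h5
  have h7 : ((-1 : ℝ)) ^ (n + 1) = 0 := by linarith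
  exact pow_ne_zero (n + 1) (by norm_num : (-1 : ℝ) ≠ 0) h7

lemma edge_sum (H : Hyp n a b) (k : ℕ) :
    eps n a b k * mm n a b k + eps n a b (k + 1) * mm n a b (k + 1) = 0 := by
  have hn := H.hn
  have hpar := H.hpar
  unfold eps mm
  by_cases h1 : k = n - 1
  · subst h1
    rw [if_pos rfl, if_pos rfl, if_neg (by omega), if_neg (by omega)]
    have he : n - 1 + 1 + 1 = n + 1 := by omega
    rw [he]
    have hodd : Odd (n + 1) := Nat.odd_iff.mpr (by omega)
    rw [hodd.neg_one_pow]
    ring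
  · by_cases h2 : k + 1 = n - 1
    · rw [if_neg h1, if_pos h2, if_pos h2, if_neg h1]
      have hodd : Odd (k + 1) := Nat.odd_iff.mpr (by omega)
      rw [hodd.neg_one_pow]
      ring
    · rw [if_neg h1, if_neg h2, if_neg h1, if_neg h2]
      have h3 : ((-1 : ℝ)) ^ (k + 1 + 1) = -((-1 : ℝ)) ^ (k + 1) := by rw [pow_succ]; ring
      rw [h3]
      ring

lemma pp_edge (H : Hyp n a b) (k : ℕ) :
    pp n a b k * mm n a b k + pp n a b (k + 1) * mm n a b (k + 1)
      = a * (mm n a b k + mm n a b (k + 1)) := by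
  unfold pp
  linear_combination edge_sum H k

lemma mm_pos (H : Hyp n a b) (k : ℕ) : 0 < mm n a b k := by
  unfold mm; split_ifs
  · exact H.mu_pos
  · exact one_pos

lemma TT_pos (H : Hyp n a b) : 0 < TT n a b :=
  Finset.sum_pos (fun i _ => mm_pos H i) ⟨0, Finset.mem_range.mpr (by omega)⟩

lemma wt_add (x : Fin (2 * n + 2)) :
    wt n a b (x, true) + wt n a b (x, false) = mm n a b x.val := by
  have h1 : wt n a b (x, true) = pp n a b x.val * mm n a b x.val := by simp [wt]
  have h2 : wt n a b (x, false) = (1 - pp n a b x.val) * mm n a b x.val := by simp [wt]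
  rw [h1, h2]; ring

/-- mass of a node-defined set -/
lemma mass_filter (pr : ℕ → Prop) [DecidablePred pr] :
    mass (pi' n a b) (Finset.univ.filter (fun ω : St n => pr ω.1.val)) =
      (∑ i ∈ Finset.range (2 * n + 2), if pr i then mm n a b i else 0) / TT n a b := by
  unfold RationalDialogues.mass
  rw [Finset.sum_filter, Fintype.sum_prod_type, Finset.sum_div,
    ← Fin.sum_univ_eq_sum_range (fun i => (if pr i then mm n a b i else 0) / TT n a b) (2 * n + 2)]
  refine Finset.sum_congr rfl fun x _ => ?_
  rw [Fintype.sum_bool]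
  by_cases h : pr x.val
  · simp only [h, if_true]
    simp only [pi']
    rw [← add_div, wt_add]
  · simp only [h, if_false, add_zero, zero_div]

lemma massA_filter (pr : ℕ → Prop) [DecidablePred pr] :
    mass (pi' n a b) ((Finset.univ.filter (fun ω : St n => pr ω.1.val)) ∩ AA n) =
      (∑ i ∈ Finset.range (2 * n + 2), if pr i then pp n a b i * mm n a b i else 0) / TT n a b := by
  have hA : (Finset.univ.filter (fun ω : St n => pr ω.1.val)) ∩ AA n
      = Finset.univ.filter (fun ω : St n => pr ω.1.val ∧ ω.2 = true) := by
    ext ω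
    simp only [AA, Finset.mem_inter, Finset.mem_filter, Finset.mem_univ, true_and]
  rw [hA]
  unfold RationalDialogues.mass
  rw [Finset.sum_filter, Fintype.sum_prod_type, Finset.sum_div,
    ← Fin.sum_univ_eq_sum_range
      (fun i => (if pr i then pp n a b i * mm n a b i else 0) / TT n a b) (2 * n + 2)]
  refine Finset.sum_congr rfl fun x _ => ?_
  rw [Fintype.sum_bool]
  by_cases h : pr x.val
  · simp only [h, true_and, if_true]
    simp only [pi', wt]
    norm_num
  · simp only [h, false_and, if_false, add_zero]
    norm_num

lemma div_div_TT (H : Hyp n a b) (X Y : ℝ) (hY : Y ≠ 0) :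
    (X / TT n a b) / (Y / TT n a b) = X / Y := by
  have hT := (TT_pos H).ne'
  field_simp

lemma opin_single (H : Hyp n a b) (C : St n → Finset (St n)) (ψ : St n)
    (h : C ψ = Finset.univ.filter (fun ω' : St n => ω'.1.val = ψ.1.val)) :
    opin (pi' n a b) (AA n) C ψ = pp n a b ψ.1.val := by
  unfold opin
  rw [h, massA_filter (fun i => i = ψ.1.val), mass_filter (fun i => i = ψ.1.val)]
  have h1 : (∑ i ∈ Finset.range (2 * n + 2), if i = ψ.1.val then pp n a b i * mm n a b i else 0)
      = pp n a b ψ.1.val * mm n a b ψ.1.val := by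
    rw [Finset.sum_ite_eq' (Finset.range (2 * n + 2)) ψ.1.val
      (fun i => pp n a b i * mm n a b i), if_pos (Finset.mem_range.mpr ψ.1.isLt)]
  have h2 : (∑ i ∈ Finset.range (2 * n + 2), if i = ψ.1.val then mm n a b i else 0)
      = mm n a b ψ.1.val := by
    rw [Finset.sum_ite_eq' (Finset.range (2 * n + 2)) ψ.1.val (fun i => mm n a b i),
      if_pos (Finset.mem_range.mpr ψ.1.isLt)]
  rw [h1, h2, div_div_TT H _ _ (mm_pos H _).ne']
  exact mul_div_cancel_right₀ _ (mm_pos H _).ne'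

lemma opin_pair (H : Hyp n a b) (C : St n → Finset (St n)) (ψ : St n) (k : ℕ)
    (hk : k + 1 < 2 * n + 2)
    (h : C ψ = Finset.univ.filter (fun ω' : St n => ω'.1.val = k ∨ ω'.1.val = k + 1)) :
    opin (pi' n a b) (AA n) C ψ = a := by
  unfold opin
  rw [h, massA_filter (fun i => i = k ∨ i = k + 1), mass_filter (fun i => i = k ∨ i = k + 1)]
  have hset : (Finset.range (2 * n + 2)).filter (fun i => i = k ∨ i = k + 1) = {k, k + 1} := by
    ext i
    simp only [Finset.mem_filter, Finset.mem_range, Finset.mem_insert, Finset.mem_singleton]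
    omega
  have hne : k ∉ ({k + 1} : Finset ℕ) := by
    simp only [Finset.mem_singleton]; omega
  have h1 : (∑ i ∈ Finset.range (2 * n + 2), if i = k ∨ i = k + 1 then pp n a b i * mm n a b i else 0)
      = pp n a b k * mm n a b k + pp n a b (k + 1) * mm n a b (k + 1) := by
    rw [← Finset.sum_filter, hset, Finset.sum_insert hne, Finset.sum_singleton]
  have h2 : (∑ i ∈ Finset.range (2 * n + 2), if i = k ∨ i = k + 1 then mm n a b i else 0)
      = mm n a b k + mm n a b (k + 1) := by
    rw [← Finset.sum_filter, hset, Finset.sum_insert hne, Finset.sum_singleton]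
  have hden : (0 : ℝ) < mm n a b k + mm n a b (k + 1) := add_pos (mm_pos H k) (mm_pos H (k + 1))
  rw [h1, h2, div_div_TT H _ _ hden.ne', pp_edge H k]
  exact mul_div_cancel_right₀ _ hden.ne'

lemma opinP_val (H : Hyp n a b) (s : ℕ) (ψ : St n) :
    opin (pi' n a b) (AA n) (Pc n s) ψ
      = if thP n ψ.1.val ≤ s then pp n a b ψ.1.val else a := by
  by_cases hd : thP n ψ.1.val ≤ s
  · rw [if_pos hd]
    apply opin_single H
    ext ω'
    simp only [Pc, Finset.mem_filter, Finset.mem_univ, true_and, Fin.ext_iff]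
    constructor
    · rintro ⟨-, him⟩; exact him hd
    · intro h; exact ⟨by omega, fun _ => h⟩
  · rw [if_neg hd]
    apply opin_pair H _ _ (2 * (ψ.1.val / 2)) (by have := ψ.1.isLt; omega)
    ext ω'
    simp only [Pc, Finset.mem_filter, Finset.mem_univ, true_and, Fin.ext_iff]
    constructor
    · rintro ⟨hdiv, -⟩; omega
    · intro h; exact ⟨by omega, fun hc => absurd hc hd⟩

lemma opinQ_val (H : Hyp n a b) (s : ℕ) (hs : 1 ≤ s) (ψ : St n) :
    opin (pi' n a b) (AA n) (Qc n s) ψ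
      = if thQ n ψ.1.val ≤ s then pp n a b ψ.1.val else a := by
  by_cases hd : thQ n ψ.1.val ≤ s
  · rw [if_pos hd]
    apply opin_single H
    ext ω'
    simp only [Qc, Finset.mem_filter, Finset.mem_univ, true_and, Fin.ext_iff]
    constructor
    · rintro ⟨-, him⟩; exact him hd
    · intro h; exact ⟨by omega, fun _ => h⟩
  · rw [if_neg hd]
    have hx : ψ.1.val < 2 * n + 2 := ψ.1.isLt
    have hx0 : ψ.1.val ≠ 0 ∧ ψ.1.val ≠ 2 * n + 1 := by
      constructor <;> intro hxx <;> simp only [thQ, hxx] at hd <;> omega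
    apply opin_pair H _ _ (2 * ((ψ.1.val + 1) / 2) - 1)
      (by simp only [thQ] at hd; omega)
    ext ω'
    simp only [Qc, Finset.mem_filter, Finset.mem_univ, true_and, Fin.ext_iff]
    have hj : 1 ≤ (ψ.1.val + 1) / 2 := by omega
    constructor
    · rintro ⟨hdiv, -⟩
      have hy : ω'.1.val < 2 * n + 2 := ω'.1.isLt
      omega
    · intro h; exact ⟨by omega, fun hc => absurd hc hd⟩

lemma coreQ (H : Hyp n a b) (s x y : ℕ) (hx : x < 2 * n + 2) (hy : y < 2 * n + 2)
    (hs : s % 2 = 0) :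
    (((y + 1) / 2 = (x + 1) / 2 ∧ (thQ n x ≤ s → y = x)) ∧
      ((if thP n y ≤ s then pp n a b y else a) = (if thP n x ≤ s then pp n a b x else a)))
    ↔ ((y + 1) / 2 = (x + 1) / 2 ∧ (thQ n x ≤ s + 1 → y = x)) := by
  have hn := H.hn
  have hpar := H.hpar
  by_cases h1 : thQ n x ≤ s
  · constructor
    · rintro ⟨⟨hq, him⟩, -⟩; exact ⟨hq, fun _ => him h1⟩
    · rintro ⟨hq, him⟩
      have hyx := him (by omega)
      subst hyx
      exact ⟨⟨hq, fun _ => rfl⟩, rfl⟩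
  · by_cases h2 : thQ n x ≤ s + 1
    · by_cases hx0 : x = 0 ∨ x = 2 * n + 1
      · have hkey : ((y + 1) / 2 = (x + 1) / 2) ↔ y = x := by omega
        constructor
        · rintro ⟨⟨hq, -⟩, -⟩; exact ⟨hq, fun _ => hkey.mp hq⟩
        · rintro ⟨hq, him⟩
          have hyx := him h2
          subst hyx
          exact ⟨⟨hq, fun _ => rfl⟩, rfl⟩
      · push_neg at hx0
        obtain ⟨hx1, hx2⟩ := hx0
        obtain ⟨j, hj⟩ : ∃ j, (x + 1) / 2 = j := ⟨_, rfl⟩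
        have hj1 : 1 ≤ j ∧ j ≤ n := by omega
        by_cases hf : 2 * j ≤ n
        · have hs2 : s = 2 * j := by simp only [thQ, hj] at h1 h2; omega
          have hd1 : thP n (2 * j - 1) ≤ s := by simp only [thP]; omega
          have hd2 : ¬ thP n (2 * j) ≤ s := by simp only [thP]; omega
          have hppne := pp_ne_a H (2 * j - 1)
          constructor
          · rintro ⟨⟨hq, -⟩, hop⟩
            refine ⟨hq, fun _ => ?_⟩
            have hy2 : y = 2 * j - 1 ∨ y = 2 * j := by omega
            have hx3 : x = 2 * j - 1 ∨ x = 2 * j := by omega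
            rcases hy2 with hy2 | hy2 <;> rcases hx3 with hx3 | hx3 <;>
              rw [hy2, hx3] at hop ⊢ <;>
              simp only [hd1, hd2, if_true, if_false] at hop <;>
              first
              | exact absurd hop hppne
              | exact absurd hop.symm hppne
          · rintro ⟨hq, him⟩
            have hyx := him h2
            subst hyx
            exact ⟨⟨hq, fun hc => absurd hc h1⟩, rfl⟩
        · have hg : n + 2 ≤ 2 * j := by omega
          have hs2 : s = 2 * n + 2 - 2 * j := by simp only [thQ, hj] at h1 h2; omega
          have hd1 : thP n (2 * j) ≤ s := by simp only [thP]; omega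
          have hd2 : ¬ thP n (2 * j - 1) ≤ s := by simp only [thP]; omega
          have hppne := pp_ne_a H (2 * j)
          constructor
          · rintro ⟨⟨hq, -⟩, hop⟩
            refine ⟨hq, fun _ => ?_⟩
            have hy2 : y = 2 * j - 1 ∨ y = 2 * j := by omega
            have hx3 : x = 2 * j - 1 ∨ x = 2 * j := by omega
            rcases hy2 with hy2 | hy2 <;> rcases hx3 with hx3 | hx3 <;>
              rw [hy2, hx3] at hop ⊢ <;>
              simp only [hd1, hd2, if_true, if_false] at hop <;>
              first
              | exact absurd hop hppne
              | exact absurd hop.symm hppne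
          · rintro ⟨hq, him⟩
            have hyx := him h2
            subst hyx
            exact ⟨⟨hq, fun hc => absurd hc h1⟩, rfl⟩
    · constructor
      · rintro ⟨⟨hq, -⟩, -⟩; exact ⟨hq, fun hc => absurd hc h2⟩
      · rintro ⟨hq, -⟩
        refine ⟨⟨hq, fun hc => absurd hc h1⟩, ?_⟩
        have hny : ¬ thP n y ≤ s := by simp only [thP, thQ] at h2 ⊢; omega
        have hnx : ¬ thP n x ≤ s := by simp only [thP, thQ] at h2 ⊢; omega
        rw [if_neg hny, if_neg hnx]

lemma coreP (H : Hyp n a b) (s x y : ℕ) (hx : x < 2 * n + 2) (hy : y < 2 * n + 2)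
    (hs : s % 2 = 1) :
    ((y / 2 = x / 2 ∧ (thP n x ≤ s → y = x)) ∧
      ((if thQ n y ≤ s then pp n a b y else a) = (if thQ n x ≤ s then pp n a b x else a)))
    ↔ (y / 2 = x / 2 ∧ (thP n x ≤ s + 1 → y = x)) := by
  have hn := H.hn
  have hpar := H.hpar
  by_cases h1 : thP n x ≤ s
  · constructor
    · rintro ⟨⟨hq, him⟩, -⟩; exact ⟨hq, fun _ => him h1⟩
    · rintro ⟨hq, him⟩
      have hyx := him (by omega)
      subst hyx
      exact ⟨⟨hq, fun _ => rfl⟩, rfl⟩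
  · by_cases h2 : thP n x ≤ s + 1
    · obtain ⟨i, hi⟩ : ∃ i, x / 2 = i := ⟨_, rfl⟩
      have hi1 : 2 * i ≤ 2 * n := by omega
      by_cases hm : 2 * i = n
      · have hs2 : s = n + 1 := by simp only [thP, hi] at h1 h2; omega
        have hd1 : thQ n (2 * i) ≤ s := by simp only [thQ]; omega
        have hd2 : thQ n (2 * i + 1) ≤ s := by simp only [thQ]; omega
        have hppne : pp n a b (2 * i) ≠ pp n a b (2 * i + 1) := by
          rw [hm]; exact pp_mid_ne H
        constructor
        · rintro ⟨⟨hq, -⟩, hop⟩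
          refine ⟨hq, fun _ => ?_⟩
          have hy2 : y = 2 * i ∨ y = 2 * i + 1 := by omega
          have hx3 : x = 2 * i ∨ x = 2 * i + 1 := by omega
          rcases hy2 with hy2 | hy2 <;> rcases hx3 with hx3 | hx3 <;>
              rw [hy2, hx3] at hop ⊢ <;>
              simp only [hd1, hd2, if_true, if_false] at hop <;>
              first
              | exact absurd hop hppne
              | exact absurd hop.symm hppne
        · rintro ⟨hq, him⟩
          have hyx := him h2
          subst hyx
          exact ⟨⟨hq, fun hc => absurd hc h1⟩, rfl⟩
      · by_cases hf : 2 * i ≤ n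
        · have hs2 : s = 2 * i + 1 := by simp only [thP, hi] at h1 h2; omega
          have hd1 : thQ n (2 * i) ≤ s := by simp only [thQ]; omega
          have hd2 : ¬ thQ n (2 * i + 1) ≤ s := by simp only [thQ]; omega
          have hppne := pp_ne_a H (2 * i)
          constructor
          · rintro ⟨⟨hq, -⟩, hop⟩
            refine ⟨hq, fun _ => ?_⟩
            have hy2 : y = 2 * i ∨ y = 2 * i + 1 := by omega
            have hx3 : x = 2 * i ∨ x = 2 * i + 1 := by omega
            rcases hy2 with hy2 | hy2 <;> rcases hx3 with hx3 | hx3 <;>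
              rw [hy2, hx3] at hop ⊢ <;>
              simp only [hd1, hd2, if_true, if_false] at hop <;>
              first
              | exact absurd hop hppne
              | exact absurd hop.symm hppne
          · rintro ⟨hq, him⟩
            have hyx := him h2
            subst hyx
            exact ⟨⟨hq, fun hc => absurd hc h1⟩, rfl⟩
        · have hg : n + 2 ≤ 2 * i := by omega
          have hs2 : s = 2 * n + 1 - 2 * i := by simp only [thP, hi] at h1 h2; omega
          have hd1 : thQ n (2 * i + 1) ≤ s := by simp only [thQ]; omega
          have hd2 : ¬ thQ n (2 * i) ≤ s := by simp only [thQ]; omega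
          have hppne := pp_ne_a H (2 * i + 1)
          constructor
          · rintro ⟨⟨hq, -⟩, hop⟩
            refine ⟨hq, fun _ => ?_⟩
            have hy2 : y = 2 * i ∨ y = 2 * i + 1 := by omega
            have hx3 : x = 2 * i ∨ x = 2 * i + 1 := by omega
            rcases hy2 with hy2 | hy2 <;> rcases hx3 with hx3 | hx3 <;>
              rw [hy2, hx3] at hop ⊢ <;>
              simp only [hd1, hd2, if_true, if_false] at hop <;>
              first
              | exact absurd hop hppne
              | exact absurd hop.symm hppne
          · rintro ⟨hq, him⟩
            have hyx := him h2
            subst hyx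
            exact ⟨⟨hq, fun hc => absurd hc h1⟩, rfl⟩
    · constructor
      · rintro ⟨⟨hq, -⟩, -⟩; exact ⟨hq, fun hc => absurd hc h2⟩
      · rintro ⟨hq, -⟩
        refine ⟨⟨hq, fun hc => absurd hc h1⟩, ?_⟩
        have hny : ¬ thQ n y ≤ s := by simp only [thP, thQ] at h2 ⊢; omega
        have hnx : ¬ thQ n x ≤ s := by simp only [thP, thQ] at h2 ⊢; omega
        rw [if_neg hny, if_neg hnx]

lemma refineQ (H : Hyp n a b) (s : ℕ) (hs : s % 2 = 0) :
    refineBy (pi' n a b) (AA n) (Pc n s) (Qc n s) = Qc n (s + 1) := by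
  funext ω
  ext ω'
  simp only [refineBy, Qc, Finset.mem_filter, Finset.mem_univ, true_and]
  rw [opinP_val H s ω', opinP_val H s ω, Fin.ext_iff]
  exact coreQ H s ω.1.val ω'.1.val ω.1.isLt ω'.1.isLt hs

lemma refineP (H : Hyp n a b) (s : ℕ) (hs : s % 2 = 1) :
    refineBy (pi' n a b) (AA n) (Qc n s) (Pc n s) = Pc n (s + 1) := by
  funext ω
  ext ω'
  simp only [refineBy, Pc, Finset.mem_filter, Finset.mem_univ, true_and]
  rw [opinQ_val H s (by omega) ω', opinQ_val H s (by omega) ω, Fin.ext_iff]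
  exact coreP H s ω.1.val ω'.1.val ω.1.isLt ω'.1.isLt hs

lemma Pc_succ_even (s : ℕ) (hs : s % 2 = 0) : Pc n s = Pc n (s + 1) := by
  funext ω
  ext ω'
  simp only [Pc, Finset.mem_filter, Finset.mem_univ, true_and]
  have h : thP n ω.1.val ≤ s ↔ thP n ω.1.val ≤ s + 1 := by
    simp only [thP]; omega
  rw [h]

lemma Qc_succ_odd (s : ℕ) (hs : s % 2 = 1) : Qc n s = Qc n (s + 1) := by
  funext ω
  ext ω'
  simp only [Qc, Finset.mem_filter, Finset.mem_univ, true_and]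
  have hx : ω.1.val < 2 * n + 2 := ω.1.isLt
  have h : thQ n ω.1.val ≤ s ↔ thQ n ω.1.val ≤ s + 1 := by
    simp only [thQ]; omega
  rw [h]

lemma partsAt_eq (H : Hyp n a b) (s : ℕ) :
    partsAt (pi' n a b) (AA n) (Pc n 0) (Qc n 0) true s = (Pc n s, Qc n s) := by
  induction s with
  | zero => rfl
  | succ s ih =>
    by_cases hsp : Even s
    · have hs0 : s % 2 = 0 := Nat.even_iff.mp hsp
      have h1 : pSpeaksAt true s := ⟨fun _ => hsp, fun _ => rfl⟩
      simp only [partsAt]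
      rw [ih, if_pos h1, Prod.mk.injEq]
      exact ⟨Pc_succ_even s hs0, refineQ H s hs0⟩
    · have hs1 : s % 2 = 1 := Nat.odd_iff.mp (Nat.odd_iff.mpr (by
        have := Nat.even_iff.not.mp hsp; omega))
      have h1 : ¬ pSpeaksAt true s := fun h => hsp (h.mp rfl)
      simp only [partsAt]
      rw [ih, if_neg h1, Prod.mk.injEq]
      exact ⟨refineP H s hs1, Qc_succ_odd s hs1⟩

lemma isPartition_Pc0 : IsPartition (Pc n 0) := by
  constructor
  · intro ω
    simp [Pc]
  · intro ω ω' h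
    simp only [Pc, Finset.mem_filter, Finset.mem_univ, true_and] at h
    obtain ⟨hdiv, -⟩ := h
    have hb1 : ω.1.val < 2 * n + 2 := ω.1.isLt
    have hb2 : ω'.1.val < 2 * n + 2 := ω'.1.isLt
    have hn1 : ¬ thP n ω.1.val ≤ 0 := by simp only [thP]; omega
    have hn2 : ¬ thP n ω'.1.val ≤ 0 := by simp only [thP]; omega
    ext ψ
    simp only [Pc, Finset.mem_filter, Finset.mem_univ, true_and]
    constructor
    · rintro ⟨h3, -⟩; exact ⟨by omega, fun hc => absurd hc hn1⟩
    · rintro ⟨h3, -⟩; exact ⟨by omega, fun hc => absurd hc hn2⟩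

lemma isPartition_Qc0 : IsPartition (Qc n 0) := by
  constructor
  · intro ω
    simp [Qc]
  · intro ω ω' h
    simp only [Qc, Finset.mem_filter, Finset.mem_univ, true_and] at h
    obtain ⟨hdiv, -⟩ := h
    have hb1 : ω.1.val < 2 * n + 2 := ω.1.isLt
    have hb2 : ω'.1.val < 2 * n + 2 := ω'.1.isLt
    have hn1 : ¬ thQ n ω.1.val ≤ 0 := by simp only [thQ]; omega
    have hn2 : ¬ thQ n ω'.1.val ≤ 0 := by simp only [thQ]; omega
    ext ψ
    simp only [Qc, Finset.mem_filter, Finset.mem_univ, true_and]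
    constructor
    · rintro ⟨h3, -⟩; exact ⟨by omega, fun hc => absurd hc hn1⟩
    · rintro ⟨h3, -⟩; exact ⟨by omega, fun hc => absurd hc hn2⟩

lemma pi'_pos (H : Hyp n a b) (ω : St n) : 0 < pi' n a b ω := by
  apply div_pos _ (TT_pos H)
  have h1 := pp_pos H ω.1.val
  have h2 := pp_lt_one H ω.1.val
  have h3 := mm_pos H ω.1.val
  unfold wt
  split_ifs
  · exact mul_pos h1 h3
  · exact mul_pos (by linarith) h3

lemma pi'_sum (H : Hyp n a b) : ∑ ω : St n, pi' n a b ω = 1 := by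
  rw [Fintype.sum_prod_type]
  have h : ∀ x : Fin (2 * n + 2), (∑ t : Bool, pi' n a b (x, t)) = mm n a b x.val / TT n a b := by
    intro x
    rw [Fintype.sum_bool]
    simp only [pi']
    rw [← add_div, wt_add]
  rw [Finset.sum_congr rfl (fun x _ => h x), ← Finset.sum_div,
    Fin.sum_univ_eq_sum_range (fun i => mm n a b i) (2 * n + 2)]
  exact div_self (TT_pos H).ne'

lemma dialogue_val (H : Hyp n a b) (ω₀ : St n) (h0 : ω₀.1.val = n - 1) (k : ℕ) :
    dialogue (pi' n a b) (AA n) (Pc n 0) (Qc n 0) true ω₀ k = if k < n then a else b := by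
  have hn := H.hn
  have hpar := H.hpar
  unfold dialogue
  rw [partsAt_eq H k]
  by_cases hk : Even k
  · have hk0 : k % 2 = 0 := Nat.even_iff.mp hk
    rw [if_pos ⟨fun _ => hk, fun _ => rfl⟩]
    show opin (pi' n a b) (AA n) (Pc n k) ω₀ = _
    rw [opinP_val H k ω₀, h0]
    have hthp : thP n (n - 1) = n := by simp only [thP]; omega
    rw [hthp, pp_val_mid]
    by_cases hkn : k < n
    · rw [if_neg (by omega), if_pos hkn]
    · rw [if_pos (by omega), if_neg hkn]
  · have hk1 : k % 2 = 1 := by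
      have := Nat.even_iff.not.mp hk; omega
    rw [if_neg (fun h => hk (h.mp rfl))]
    show opin (pi' n a b) (AA n) (Qc n k) ω₀ = _
    rw [opinQ_val H k (by omega) ω₀, h0]
    have hthq : thQ n (n - 1) = n + 1 := by simp only [thQ]; omega
    rw [hthq, pp_val_mid]
    by_cases hkn : k < n
    · rw [if_neg (by omega), if_pos hkn]
    · rw [if_pos (by omega), if_neg hkn]

end Jump

/-- For every positive even `n` and `a ≠ b` in `(0,1)`,
there is a Bayesian opinion framework and a fixed state whose dialogue has
both agents announcing the same opinion `a` for the first `n` periods and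
then jumping to consensus at `b` for all subsequent times. -/
theorem apparent_agreement_then_jump
    (n : ℕ) (hn : 0 < n) (hne : Even n) (a b : ℝ)
    (ha : 0 < a ∧ a < 1) (hb : 0 < b ∧ b < 1) (hab : a ≠ b) :
    ∃ (Ω : Type) (_ : Fintype Ω) (_ : DecidableEq Ω) (π : Ω → ℝ) (A : Finset Ω)
      (P Q : Ω → Finset Ω) (pFirst : Bool) (ω₀ : Ω),
      IsBOF π P Q ∧
      (∀ k, k < n → dialogue π A P Q pFirst ω₀ k = a) ∧
      (∀ k, n ≤ k → dialogue π A P Q pFirst ω₀ k = b) := by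
  have H : Jump.Hyp n a b :=
    ⟨ha.1, ha.2, hb.1, hb.2, hab, by have := Nat.even_iff.mp hne; omega, Nat.even_iff.mp hne⟩
  refine ⟨Jump.St n, inferInstance, inferInstance, Jump.pi' n a b, Jump.AA n,
    Jump.Pc n 0, Jump.Qc n 0, true, (⟨n - 1, by omega⟩, true), ?_, ?_, ?_⟩
  · exact ⟨Jump.pi'_pos H, Jump.pi'_sum H, Jump.isPartition_Pc0, Jump.isPartition_Qc0⟩
  · intro k hk
    rw [Jump.dialogue_val H _ rfl k, if_pos hk]
  · intro k hk
    rw [Jump.dialogue_val H _ rfl k, if_neg (by omega)]
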